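/- Let u, v ∈ ℝ^m be sorted vectors with all coordinates distinct (interiors of alcoves). For i ∈ [m], let σ_{i,u} be the permutation sorting the shifted vector i⋆u = (u_0 − 1, ..., u_i + m − 1, ..., u_{m-1} − 1). Then ‖i·u − i·v‖ = ‖u − v‖ if and only if σ_{i,u} = σ_{i,v}. -/

import Mathlib

/-- The shift during the action of letter `i` on `ℝ^m`: add `m` to coordinate `i`
and subtract `1` from every coordinate. -/
def shiftVec (m : ℕ) (i : Fin m) (x : Fin m → ℝ) : Fin m → ℝ :=
  fun j => x j - 1 + if j = i then (m : ℝ) else 0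

/-- Sort the coordinates of a vector into weakly increasing order. -/
noncomputable def sortVec {m : ℕ} (x : Fin m → ℝ) : Fin m → ℝ := x ∘ Tuple.sort x

/-- The action of the letter `i ∈ [m]` on `V^m`: shift, then re-sort. -/
noncomputable def letterV (m : ℕ) (i : Fin m) (x : Fin m → ℝ) : Fin m → ℝ :=
  sortVec (shiftVec m i x)

/-- `stepsV m p x i = p_{i-1} ⋯ p_1 p_0 ⋅ x`: the word acts letter by letter, the
letter `p 0` (rightmost) acting first. -/
noncomputable def stepsV (m : ℕ) (p : ℕ → Fin m) (x : Fin m → ℝ) : ℕ → (Fin m → ℝ)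
  | 0 => x
  | k+1 => letterV m (p k) (stepsV m p x k)

/-- Membership in the Weyl chamber `V^m`: coordinates sum to `0` and are weakly
increasing. -/
def InV (m : ℕ) (x : Fin m → ℝ) : Prop := (∑ j, x j) = 0 ∧ Monotone x

/-- The Euclidean norm on `ℝ^m`. -/
noncomputable def eNorm {m : ℕ} (x : Fin m → ℝ) : ℝ := Real.sqrt (∑ j, (x j) ^ 2)


/-- A strictly monotone permutation of `Fin m` is the identity. -/
lemma strictMono_perm_eq_one {m : ℕ} (ρ : Equiv.Perm (Fin m)) (h : StrictMono ⇑ρ) :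
    ρ = 1 := by
  haveI : WellFoundedLT (Fin m) := inferInstance
  have hinv : StrictMono ⇑ρ⁻¹ := by
    intro a b hab
    rw [← h.lt_iff_lt, Equiv.Perm.inv_def, Equiv.apply_symm_apply, Equiv.apply_symm_apply]
    exact hab
  refine Equiv.ext fun x => le_antisymm ?_ (h.le_apply)
  have := hinv.le_apply (x := ρ x)
  simpa using this

lemma monovary_of_strictMono {m : ℕ} {c d : Fin m → ℝ} (hc : StrictMono c)
    (hd : StrictMono d) : Monovary c d := by
  intro j k h
  exact (hc (hd.lt_iff_lt.mp h)).le

lemma strictMono_of_monovary {m : ℕ} {c d : Fin m → ℝ} (hc : StrictMono c)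
    (hd : StrictMono d) (ρ : Equiv.Perm (Fin m)) (h : Monovary c (d ∘ ρ)) :
    StrictMono ρ := by
  intro j k hjk
  rcases lt_trichotomy (ρ j) (ρ k) with h1 | h1 | h1
  · exact h1
  · exact absurd (ρ.injective h1) hjk.ne
  · have : c k ≤ c j := h (show (d ∘ ρ) k < (d ∘ ρ) j from hd h1)
    exact absurd this (not_le.mpr (hc hjk))

lemma sum_sq_sub_expand {m : ℕ} (c d : Fin m → ℝ) :
    ∑ j, (c j - d j) ^ 2 =
      ∑ j, (c j) ^ 2 + ∑ j, (d j) ^ 2 - 2 * ∑ j, c j * d j := by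
  rw [Finset.mul_sum, ← Finset.sum_add_distrib, ← Finset.sum_sub_distrib]
  exact Finset.sum_congr rfl fun j _ => by ring

lemma shiftVec_inj {m : ℕ} (i : Fin m) (x : Fin m → ℝ)
    (hx : ∀ j k : Fin m, j ≠ k → ∀ t : ℤ, x j - x k ≠ (m : ℝ) * t) :
    Function.Injective (shiftVec m i x) := by
  intro j k h
  by_contra hne
  rcases eq_or_ne j i with hj | hj <;> rcases eq_or_ne k i with hk | hk
  · exact hne (hj.trans hk.symm)
  · simp only [shiftVec, if_pos hj, if_neg hk] at h
    exact hx j k hne (-1) (by push_cast; linarith)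
  · simp only [shiftVec, if_neg hj, if_pos hk] at h
    exact hx j k hne 1 (by push_cast; linarith)
  · simp only [shiftVec, if_neg hj, if_neg hk] at h
    exact hx j k hne 0 (by push_cast; linarith)

/-- For sorted vectors `u, v` in the interior of alcoves (no two coordinates
congruent mod `m`), the letter `i` preserves the Euclidean distance if and only
if the shifted vectors `i ⋆ u` and `i ⋆ v` are sorted by the same permutation. -/
theorem norm_eq_iff_same_sorting (m : ℕ) (hm : 0 < m) (i : Fin m)
    (u v : Fin m → ℝ) (hu : InV m u) (hv : InV m v)
    (hualc : ∀ j k : Fin m, j ≠ k → ∀ t : ℤ, u j - u k ≠ (m : ℝ) * t)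
    (hvalc : ∀ j k : Fin m, j ≠ k → ∀ t : ℤ, v j - v k ≠ (m : ℝ) * t) :
    eNorm (fun j => letterV m i u j - letterV m i v j) =
        eNorm (fun j => u j - v j) ↔
      Tuple.sort (shiftVec m i u) = Tuple.sort (shiftVec m i v) := by
  classical
  simp only [letterV, sortVec, eNorm]
  set a := shiftVec m i u with ha_def
  set b := shiftVec m i v with hb_def
  have hainj : Function.Injective a := shiftVec_inj i u hualc
  have hbinj : Function.Injective b := shiftVec_inj i v hvalc
  set σ := Tuple.sort a with hσ_def
  set τ := Tuple.sort b with hτ_def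
  have hc : StrictMono (a ∘ σ) :=
    (Tuple.monotone_sort a).strictMono_of_injective (hainj.comp σ.injective)
  have hd : StrictMono (b ∘ τ) :=
    (Tuple.monotone_sort b).strictMono_of_injective (hbinj.comp τ.injective)
  set c := a ∘ σ with hc_def
  set d := b ∘ τ with hd_def
  set ρ : Equiv.Perm (Fin m) := τ⁻¹ * σ with hρ_def
  have hab : ∀ j, a j - b j = u j - v j := fun j => by
    simp only [ha_def, hb_def, shiftVec]; ring
  have hA2 : ∑ j, (c j) ^ 2 = ∑ j, (a j) ^ 2 := Equiv.sum_comp σ fun j => (a j) ^ 2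
  have hB2 : ∑ j, (d j) ^ 2 = ∑ j, (b j) ^ 2 := Equiv.sum_comp τ fun j => (b j) ^ 2
  have hS0 : ∑ j, a j * b j = ∑ j, c j * d (ρ j) := by
    rw [← Equiv.sum_comp σ fun j => a j * b j]
    exact Finset.sum_congr rfl fun j _ => by
      simp only [hc_def, hd_def, hρ_def, Function.comp_apply, Equiv.Perm.mul_apply,
        Equiv.Perm.inv_def, Equiv.apply_symm_apply]
  have hnn1 : (0:ℝ) ≤ ∑ j, (c j - d j) ^ 2 := Finset.sum_nonneg fun j _ => sq_nonneg _
  have hnn2 : (0:ℝ) ≤ ∑ j, (u j - v j) ^ 2 := Finset.sum_nonneg fun j _ => sq_nonneg _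
  rw [Real.sqrt_inj hnn1 hnn2]
  have key : (∑ j, (c j - d j) ^ 2 = ∑ j, (u j - v j) ^ 2) ↔
      (∑ j, c j * d (ρ j) = ∑ j, c j * d j) := by
    have h2 : ∑ j, (u j - v j) ^ 2 =
        ∑ j, (a j) ^ 2 + ∑ j, (b j) ^ 2 - 2 * ∑ j, c j * d (ρ j) := by
      rw [← hS0, ← sum_sq_sub_expand a b]
      exact Finset.sum_congr rfl fun j _ => by rw [hab j]
    rw [sum_sq_sub_expand c d, h2, hA2, hB2]
    constructor <;> intro h <;> linarith
  rw [key, (monovary_of_strictMono hc hd).sum_mul_comp_perm_eq_sum_mul_iff]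
  constructor
  · intro h
    have h1 : ρ = 1 := strictMono_perm_eq_one ρ (strictMono_of_monovary hc hd ρ h)
    rw [hρ_def] at h1
    exact (inv_mul_eq_one.mp h1).symm
  · intro h
    have h1 : ρ = 1 := by rw [hρ_def, h, inv_mul_cancel]
    rw [h1]
    have hid : d ∘ ⇑(1 : Equiv.Perm (Fin m)) = d := by ext x; simp
    rw [hid]
    exact monovary_of_strictMono hc hd
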